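/- The Rayleigh property is preserved under contraction: if a matroid M on [n] is Rayleigh, then for any non-loop element g, the contraction M/g is Rayleigh. -/

import Mathlib

open Finset

/-- Basis generating polynomial of the collection `Bs`, restricted to bases
containing `I` and disjoint from `J`, evaluated at weights `a`. -/
def genPoly {α : Type*} [DecidableEq α] (Bs : Finset (Finset α)) (I J : Finset α)
    (a : α → ℝ) : ℝ :=
  ∑ B ∈ Bs.filter (fun B => I ⊆ B ∧ Disjoint J B), ∏ i ∈ B, a i

/-- The Rayleigh property for a matroid given by its collection of bases. -/
def IsRayleigh {α : Type*} [DecidableEq α] (Bs : Finset (Finset α)) : Prop :=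
  ∀ e f : α, e ≠ f → ∀ a : α → ℝ, (∀ i, 0 ≤ a i) →
    genPoly Bs {e, f} ∅ a * genPoly Bs ∅ {e, f} a ≤
      genPoly Bs {e} {f} a * genPoly Bs {f} {e} a

/-- `Bs` is the collection of bases of a matroid: nonempty and satisfying the
basis exchange axiom. -/
def IsMatroidBases {α : Type*} [DecidableEq α] (Bs : Finset (Finset α)) : Prop :=
  Bs.Nonempty ∧
    ∀ B₁ ∈ Bs, ∀ B₂ ∈ Bs, ∀ x ∈ B₁ \ B₂, ∃ y ∈ B₂ \ B₁, insert y (B₁.erase x) ∈ Bs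

lemma genPoly_nonneg {α : Type*} [DecidableEq α] (Bs : Finset (Finset α)) (I J : Finset α)
    (a : α → ℝ) (ha : ∀ i, 0 ≤ a i) : 0 ≤ genPoly Bs I J a :=
  Finset.sum_nonneg fun _ _ => Finset.prod_nonneg fun i _ => ha i

lemma genPoly_split {α : Type*} [DecidableEq α] (Bs : Finset (Finset α)) (g : α)
    (I J : Finset α) (hI : g ∉ I) (hJ : g ∉ J) (a : α → ℝ) (t : ℝ) :
    genPoly Bs I J (Function.update a g t)
      = t * genPoly ((Bs.filter (fun B => g ∈ B)).image (fun B => B.erase g)) I J a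
        + genPoly (Bs.filter (fun B => g ∉ B)) I J a := by
  classical
  set a' := Function.update a g t with ha'
  have hupd : ∀ i ≠ g, a' i = a i := fun i hi => Function.update_of_ne hi t a
  -- decompose the LHS by whether g ∈ B
  rw [genPoly, ← Finset.sum_filter_add_sum_filter_not
      (Bs.filter (fun B => I ⊆ B ∧ Disjoint J B)) (fun B => g ∈ B)]
  congr 1
  · -- bases containing g
    have himg : genPoly ((Bs.filter (fun B => g ∈ B)).image (fun B => B.erase g)) I J a
        = ∑ B ∈ (Bs.filter (fun B => I ⊆ B ∧ Disjoint J B)).filter (fun B => g ∈ B),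
            ∏ i ∈ B.erase g, a i := by
      rw [genPoly, Finset.filter_image, Finset.sum_image]
      · congr 1
        ext B
        simp only [Finset.mem_filter]
        constructor
        · rintro ⟨⟨hB, hgB⟩, hIB, hJB⟩
          refine ⟨⟨hB, (Finset.subset_erase.mp hIB).1, ?_⟩, hgB⟩
          rw [Finset.disjoint_left]
          intro x hxJ hxB
          have hxe : x ∈ B.erase g :=
            Finset.mem_erase.mpr ⟨fun h => hJ (h ▸ hxJ), hxB⟩
          exact Finset.disjoint_left.mp hJB hxJ hxe
        · rintro ⟨⟨hB, hIB, hJB⟩, hgB⟩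
          refine ⟨⟨hB, hgB⟩, Finset.subset_erase.mpr ⟨hIB, hI⟩, ?_⟩
          exact hJB.mono_right (Finset.erase_subset g B)
      · intro B₁ h₁ B₂ h₂ h
        simp only [Finset.mem_coe, Finset.mem_filter] at h₁ h₂
        rw [← Finset.insert_erase h₁.1.2, ← Finset.insert_erase h₂.1.2, show B₁.erase g = B₂.erase g from h]
    rw [himg, Finset.mul_sum]
    refine Finset.sum_congr rfl fun B hB => ?_
    simp only [Finset.mem_filter] at hB
    have hgB : g ∈ B := hB.2
    rw [← Finset.mul_prod_erase B a' hgB]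
    have : a' g = t := Function.update_self g t a
    rw [this]
    congr 1
    exact Finset.prod_congr rfl fun i hi => hupd i (Finset.mem_erase.mp hi).1
  · -- bases not containing g
    rw [genPoly]
    have hset : (Bs.filter (fun B => I ⊆ B ∧ Disjoint J B)).filter (fun B => ¬ g ∈ B)
        = (Bs.filter (fun B => g ∉ B)).filter (fun B => I ⊆ B ∧ Disjoint J B) := by
      simp only [Finset.filter_filter]
      exact Finset.filter_congr fun B _ => by tauto
    rw [hset]
    refine Finset.sum_congr rfl fun B hB => ?_
    simp only [Finset.mem_filter] at hB
    exact Finset.prod_congr rfl fun i hi => hupd i (fun h => hB.1.2 (h ▸ hi))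

/-- The Rayleigh property is preserved under contraction of a non-loop element `g`. -/
theorem rayleigh_contraction (n : ℕ) (Bs : Finset (Finset (Fin n)))
    (hM : IsMatroidBases Bs) (hR : IsRayleigh Bs) (g : Fin n)
    (hg : ∃ B ∈ Bs, g ∈ B) :
    ∀ e f : Fin n, e ≠ f → e ≠ g → f ≠ g → ∀ a : Fin n → ℝ, (∀ i, 0 ≤ a i) →
      genPoly ((Bs.filter (fun B => g ∈ B)).image (fun B => B.erase g)) {e, f} ∅ a *
          genPoly ((Bs.filter (fun B => g ∈ B)).image (fun B => B.erase g)) ∅ {e, f} a ≤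
        genPoly ((Bs.filter (fun B => g ∈ B)).image (fun B => B.erase g)) {e} {f} a *
          genPoly ((Bs.filter (fun B => g ∈ B)).image (fun B => B.erase g)) {f} {e} a := by
  classical
  intro e f hef heg hfg a ha
  set Bc := (Bs.filter (fun B => g ∈ B)).image (fun B => B.erase g) with hBc
  set Bd := Bs.filter (fun B => g ∉ B) with hBd
  -- g-membership facts
  have hgef : g ∉ ({e, f} : Finset (Fin n)) := by
    simp only [Finset.mem_insert, Finset.mem_singleton]
    rintro (h | h)
    · exact heg h.symm
    · exact hfg h.symm
  have hge : g ∉ ({e} : Finset (Fin n)) := by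
    simp only [Finset.mem_singleton]; exact fun h => heg h.symm
  have hgf : g ∉ ({f} : Finset (Fin n)) := by
    simp only [Finset.mem_singleton]; exact fun h => hfg h.symm
  have hgemp : g ∉ (∅ : Finset (Fin n)) := Finset.notMem_empty g
  set C1 := genPoly Bc {e, f} ∅ a
  set C2 := genPoly Bc ∅ {e, f} a
  set C3 := genPoly Bc {e} {f} a
  set C4 := genPoly Bc {f} {e} a
  set D1 := genPoly Bd {e, f} ∅ a
  set D2 := genPoly Bd ∅ {e, f} a
  set D3 := genPoly Bd {e} {f} a
  set D4 := genPoly Bd {f} {e} a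
  have hC1 : 0 ≤ C1 := genPoly_nonneg _ _ _ _ ha
  have hC2 : 0 ≤ C2 := genPoly_nonneg _ _ _ _ ha
  have hC3 : 0 ≤ C3 := genPoly_nonneg _ _ _ _ ha
  have hC4 : 0 ≤ C4 := genPoly_nonneg _ _ _ _ ha
  have hD1 : 0 ≤ D1 := genPoly_nonneg _ _ _ _ ha
  have hD2 : 0 ≤ D2 := genPoly_nonneg _ _ _ _ ha
  have hD3 : 0 ≤ D3 := genPoly_nonneg _ _ _ _ ha
  have hD4 : 0 ≤ D4 := genPoly_nonneg _ _ _ _ ha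
  have key : ∀ t : ℝ, 0 ≤ t →
      (t * C1 + D1) * (t * C2 + D2) ≤ (t * C3 + D3) * (t * C4 + D4) := by
    intro t ht
    have ha' : ∀ i, 0 ≤ Function.update a g t i := by
      intro i
      by_cases h : i = g
      · subst h; rw [Function.update_self]; exact ht
      · rw [Function.update_of_ne h]; exact ha i
    have := hR e f hef (Function.update a g t) ha'
    rwa [genPoly_split Bs g {e, f} ∅ hgef hgemp a t,
      genPoly_split Bs g ∅ {e, f} hgemp hgef a t,
      genPoly_split Bs g {e} {f} hge hgf a t,
      genPoly_split Bs g {f} {e} hgf hge a t] at this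
  -- ε-argument: C1*C2 ≤ C3*C4 + ε for all ε > 0
  refine le_of_forall_pos_le_add ?_
  intro ε hε
  set L := C3 * D4 + D3 * C4 + D3 * D4 with hL
  have hLnn : 0 ≤ L := by positivity
  set t := max 1 (L / ε + 1) with htdef
  have ht1 : (1 : ℝ) ≤ t := le_max_left _ _
  have ht0 : 0 < t := lt_of_lt_of_le one_pos ht1
  have hLt : L ≤ ε * t := by
    have h1 : L / ε + 1 ≤ t := le_max_right _ _
    have : ε * (L / ε + 1) ≤ ε * t := mul_le_mul_of_nonneg_left h1 hε.le
    calc L = ε * (L / ε) := by field_simp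
      _ ≤ ε * (L / ε + 1) := by nlinarith
      _ ≤ ε * t := this
  have hk := key t ht0.le
  have h1 : t * t * (C1 * C2) ≤ (t * C1 + D1) * (t * C2 + D2) := by
    nlinarith [mul_nonneg (mul_nonneg ht0.le hC1) hD2,
      mul_nonneg (mul_nonneg ht0.le hD1) hC2, mul_nonneg hD1 hD2]
  have h2 : (t * C3 + D3) * (t * C4 + D4) ≤ t * t * (C3 * C4) + t * L := by
    have : (t - 1) * (D3 * D4) ≥ 0 :=
      mul_nonneg (by linarith) (mul_nonneg hD3 hD4)
    nlinarith
  have h3 : t * L ≤ t * (ε * t) := mul_le_mul_of_nonneg_left hLt ht0.le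
  have h4 : t * t * (C1 * C2) ≤ t * t * (C3 * C4 + ε) := by nlinarith
  exact le_of_mul_le_mul_left (by linarith [h4]) (mul_pos ht0 ht0)
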